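/- Let δ ∈ ℝ∪{∞} and set r = e^{−δ}. For any two pseudo-convergent sequences E = {s_n} and F = {t_n} in K, both of breadth δ, the limit lim_{n→∞} max{d(s_n,t_n) − r, 0} exists in [0,∞). Moreover, if E' = {s'_n} is another pseudo-convergent sequence of breadth δ with V_{E'} = V_E, then lim_{n→∞} max{d(s'_n,t_n) − r, 0} = lim_{n→∞} max{d(s_n,t_n) − r, 0}; hence d_δ(V_E,V_F) = lim_{n→∞} max{d(s_n,t_n) − r, 0} is a well-defined function on 𝒱(•,δ) × 𝒱(•,δ). -/

import Mathlib

open Filter Topology TopologicalSpace Set Polynomial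

noncomputable section

namespace PaperPCZar

variable {K : Type*} [Field K]

/-- `expNeg γ = e^{-γ}` for `γ ∈ ℝ ∪ {∞}`, with `e^{-∞} = 0`. -/
def expNeg (γ : WithTop ℝ) : ℝ := WithTop.recTopCoe 0 (fun r => Real.exp (-r)) γ

/-- `v` is a rank-one (i.e. nontrivial, real-valued) valuation. -/
def IsRankOne (v : AddValuation K (WithTop ℝ)) : Prop := ∃ x : K, v x ≠ 0 ∧ v x ≠ ⊤

/-- The value group `Γ_v` of `v`, as a subset of `ℝ`. -/
def valueGroup (v : AddValuation K (WithTop ℝ)) : Set ℝ := {r : ℝ | ∃ x : K, v x = (r : WithTop ℝ)}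

/-- `ℚΓ_v = {q·γ : q ∈ ℚ, γ ∈ Γ_v}`, the divisible hull of the value group inside `ℝ`. -/
def QGamma (v : AddValuation K (WithTop ℝ)) : Set ℝ :=
  {r : ℝ | ∃ (q : ℚ) (γ : ℝ), γ ∈ valueGroup v ∧ r = q * γ}

/-- Order convergence of a sequence in `ℝ ∪ {∞}` to `γ`. -/
def OrdLim (f : ℕ → WithTop ℝ) (γ : WithTop ℝ) : Prop :=
  (∀ a : WithTop ℝ, a < γ → ∀ᶠ n in atTop, a < f n) ∧
  (∀ b : WithTop ℝ, γ < b → ∀ᶠ n in atTop, f n < b)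

/-- `s` is a pseudo-convergent sequence with respect to `v`. -/
def IsPC (v : AddValuation K (WithTop ℝ)) (s : ℕ → K) : Prop :=
  ∀ n, v (s (n + 1) - s n) < v (s (n + 2) - s (n + 1))

/-- `s` is a pseudo-divergent sequence with respect to `v`. -/
def IsPD (v : AddValuation K (WithTop ℝ)) (s : ℕ → K) : Prop :=
  ∀ n, v (s (n + 1) - s (n + 2)) < v (s n - s (n + 1))

/-- `s` is a pseudo-stationary sequence with respect to `v`. -/
def IsPS (v : AddValuation K (WithTop ℝ)) (s : ℕ → K) : Prop :=
  ∀ n m n' m' : ℕ, n ≠ m → n' ≠ m' → v (s n - s m) = v (s n' - s m')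

/-- `δ ∈ ℝ ∪ {∞}` is the breadth of the sequence `s`, i.e. `δ = lim_n v(s_{n+1} - s_n)`. -/
def IsBreadth (v : AddValuation K (WithTop ℝ)) (s : ℕ → K) (δ : WithTop ℝ) : Prop :=
  OrdLim (fun n => v (s (n + 1) - s n)) δ

/-- `α ∈ K` is a pseudo-limit of the pseudo-convergent sequence `s`. -/
def IsPCLimit (v : AddValuation K (WithTop ℝ)) (s : ℕ → K) (α : K) : Prop :=
  ∀ n, v (α - s n) < v (α - s (n + 1))

/-- `α ∈ K` is a pseudo-limit of the pseudo-divergent sequence `s`. -/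
def IsPDLimit (v : AddValuation K (WithTop ℝ)) (s : ℕ → K) (α : K) : Prop :=
  ∀ n, v (α - s (n + 1)) < v (α - s n)

/-- `β ∈ K̄` is a pseudo-limit of `s ⊆ K` with respect to an extension `u` of `v`
to the algebraic closure of `K`. -/
def IsPCLimitAC (u : AddValuation (AlgebraicClosure K) (WithTop ℝ)) (s : ℕ → K)
    (β : AlgebraicClosure K) : Prop :=
  ∀ n, u (β - algebraMap K (AlgebraicClosure K) (s n)) <
    u (β - algebraMap K (AlgebraicClosure K) (s (n + 1)))

/-- `s` is of transcendental type: for every polynomial `f`, `v(f(s_n))` eventually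
stabilizes. -/
def IsTranscendentalType (v : AddValuation K (WithTop ℝ)) (s : ℕ → K) : Prop :=
  ∀ f : Polynomial K, ∃ N, ∀ n ≥ N, v (f.eval (s n)) = v (f.eval (s N))

/-- The ultrametric distance `d(x,y) = e^{-v(x-y)}` on `K`. -/
def dK (v : AddValuation K (WithTop ℝ)) (x y : K) : ℝ := expNeg (v (x - y))

/-- The set `V_E = {φ ∈ K(X) : φ(s_n) ∈ V for all but finitely many n}`. -/
def VESet (v : AddValuation K (WithTop ℝ)) (s : ℕ → K) : Set (RatFunc K) :=
  {φ : RatFunc K | ∀ᶠ n in atTop, 0 ≤ v (RatFunc.eval (RingHom.id K) (s n) φ)}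

/-- `Zar(K(X)|V)`: the valuation subrings of `K(X)` containing (the image of) `V`. -/
def ZarSet (v : AddValuation K (WithTop ℝ)) : Set (ValuationSubring (RatFunc K)) :=
  {W | ∀ x : K, 0 ≤ v x → algebraMap K (RatFunc K) x ∈ W}

/-- `𝒱`: valuation subrings of `K(X)` of the form `V_E`, `E` pseudo-convergent. -/
def VV (v : AddValuation K (WithTop ℝ)) : Set (ValuationSubring (RatFunc K)) :=
  {W | ∃ s : ℕ → K, IsPC v s ∧ (W : Set (RatFunc K)) = VESet v s}

/-- `𝒱(•,δ)`: those `V_E` with `E` pseudo-convergent of breadth `δ`. -/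
def VVδ (v : AddValuation K (WithTop ℝ)) (δ : WithTop ℝ) : Set (ValuationSubring (RatFunc K)) :=
  {W | ∃ s : ℕ → K, IsPC v s ∧ IsBreadth v s δ ∧ (W : Set (RatFunc K)) = VESet v s}

/-- `𝒱_K(•,δ)`: those `V_E` with `E` pseudo-convergent of breadth `δ` having a
pseudo-limit in `K`. -/
def VVKδ (v : AddValuation K (WithTop ℝ)) (δ : WithTop ℝ) : Set (ValuationSubring (RatFunc K)) :=
  {W | ∃ s : ℕ → K, IsPC v s ∧ IsBreadth v s δ ∧ (∃ α : K, IsPCLimit v s α) ∧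
    (W : Set (RatFunc K)) = VESet v s}

/-- `𝒱(β,•)`: those `V_E` with `E` pseudo-convergent having `β ∈ K̄` as a pseudo-limit
with respect to `u`. -/
def VVβ (v : AddValuation K (WithTop ℝ)) (u : AddValuation (AlgebraicClosure K) (WithTop ℝ))
    (β : AlgebraicClosure K) : Set (ValuationSubring (RatFunc K)) :=
  {W | ∃ s : ℕ → K, IsPC v s ∧ IsPCLimitAC u s β ∧ (W : Set (RatFunc K)) = VESet v s}

/-- `𝒱(β,•)` for a pseudo-limit `β ∈ K`. -/
def VVβK (v : AddValuation K (WithTop ℝ)) (β : K) : Set (ValuationSubring (RatFunc K)) :=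
  {W | ∃ s : ℕ → K, IsPC v s ∧ IsPCLimit v s β ∧ (W : Set (RatFunc K)) = VESet v s}

/-- `𝒱_div`: those `V_E` with `E` pseudo-divergent. -/
def VVdiv (v : AddValuation K (WithTop ℝ)) : Set (ValuationSubring (RatFunc K)) :=
  {W | ∃ s : ℕ → K, IsPD v s ∧ (W : Set (RatFunc K)) = VESet v s}

/-- `𝒱_div(•,δ)`: those `V_E` with `E` pseudo-divergent of breadth `δ`. -/
def VVdivδ (v : AddValuation K (WithTop ℝ)) (δ : WithTop ℝ) : Set (ValuationSubring (RatFunc K)) :=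
  {W | ∃ s : ℕ → K, IsPD v s ∧ IsBreadth v s δ ∧ (W : Set (RatFunc K)) = VESet v s}

/-- `𝒱_div(β,•)`: those `V_E` with `E` pseudo-divergent having `β ∈ K` as a pseudo-limit. -/
def VVdivβ (v : AddValuation K (WithTop ℝ)) (β : K) : Set (ValuationSubring (RatFunc K)) :=
  {W | ∃ s : ℕ → K, IsPD v s ∧ IsPDLimit v s β ∧ (W : Set (RatFunc K)) = VESet v s}

/-- `𝒱_stat(•,δ)`: those `V_E` with `E` pseudo-stationary of breadth `δ`. -/
def VVstatδ (v : AddValuation K (WithTop ℝ)) (δ : WithTop ℝ) :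
    Set (ValuationSubring (RatFunc K)) :=
  {W | ∃ s : ℕ → K, (∀ n m : ℕ, n ≠ m → v (s n - s m) = δ) ∧
    (W : Set (RatFunc K)) = VESet v s}

/-- `𝒱_stat(β,•)`: those `V_E` with `E` pseudo-stationary having `β` as a pseudo-limit. -/
def VVstatβ (v : AddValuation K (WithTop ℝ)) (β : K) : Set (ValuationSubring (RatFunc K)) :=
  {W | ∃ (s : ℕ → K) (δ : WithTop ℝ), (∀ n m : ℕ, n ≠ m → v (s n - s m) = δ) ∧
    (∀ n, δ ≤ v (β - s n)) ∧ (W : Set (RatFunc K)) = VESet v s}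

/-- The Zariski topology on the valuation subrings of a field `L`, generated by the
sets `B(φ) = {W : φ ∈ W}`. -/
def zarTop (L : Type*) [Field L] : TopologicalSpace (ValuationSubring L) :=
  generateFrom {U | ∃ φ : L, U = {W : ValuationSubring L | φ ∈ W}}

/-- The constructible topology on the valuation subrings of a field `L`: the coarsest
topology in which all finite intersections `B(φ₁) ∩ ⋯ ∩ B(φ_k)` are open and closed. -/
def consTop (L : Type*) [Field L] : TopologicalSpace (ValuationSubring L) :=
  generateFrom {U | ∃ T : Finset L, U = {W : ValuationSubring L | ∀ φ ∈ T, φ ∈ W} ∨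
    U = {W : ValuationSubring L | ∀ φ ∈ T, φ ∈ W}ᶜ}

/-- The subspace Zariski topology on a set of valuation subrings. -/
def zarSub {L : Type*} [Field L] (S : Set (ValuationSubring L)) : TopologicalSpace ↥S :=
  (zarTop L).induced Subtype.val

/-- The subspace constructible topology on a set of valuation subrings. -/
def consSub {L : Type*} [Field L] (S : Set (ValuationSubring L)) : TopologicalSpace ↥S :=
  (consTop L).induced Subtype.val

/-- `d` is a metric on `X` inducing the topology `t`. -/
def MetrizedBy {X : Type*} (t : TopologicalSpace X) (d : X → X → ℝ) : Prop :=
  (∀ x y, d x y = d y x) ∧ (∀ x y, d x y = 0 ↔ x = y) ∧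
  (∀ x y z, d x z ≤ d x y + d y z) ∧
  t = generateFrom {U : Set X | ∃ (x : X) (ε : ℝ), 0 < ε ∧ U = {y | d x y < ε}}

/-- The topology `t` is metrizable. -/
def IsMetrizable {X : Type*} (t : TopologicalSpace X) : Prop := ∃ d, MetrizedBy t d

/-- The topology `t` is induced by an ultrametric. -/
def IsUltrametrizable {X : Type*} (t : TopologicalSpace X) : Prop :=
  ∃ d, MetrizedBy t d ∧ ∀ x y z, d x z ≤ max (d x y) (d y z)

/-- `dd` computes the distance `d_δ` on `𝒱(•,δ)`:
`d_δ(V_E, V_F) = lim_n max (d(s_n,t_n) - e^{-δ}) 0`. -/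
def IsDistδ (v : AddValuation K (WithTop ℝ)) (δ : WithTop ℝ)
    (dd : ValuationSubring (RatFunc K) → ValuationSubring (RatFunc K) → ℝ) : Prop :=
  ∀ (W W' : ValuationSubring (RatFunc K)) (s t : ℕ → K),
    IsPC v s → IsBreadth v s δ → (W : Set (RatFunc K)) = VESet v s →
    IsPC v t → IsBreadth v t δ → (W' : Set (RatFunc K)) = VESet v t →
    Tendsto (fun n => max (dK v (s n) (t n) - expNeg δ) 0) atTop (𝓝 (dd W W'))

/-- The `Λ`-upper limit topology on the interval `(-∞, b] ⊆ ℝ ∪ {∞}`, generated by the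
half-open intervals `(α, λ]` with `λ ∈ Λ ∪ {∞}`. -/
def upperTopWT (b : WithTop ℝ) (Λ : Set ℝ) : TopologicalSpace {γ : WithTop ℝ // γ ≤ b} :=
  generateFrom {U | ∃ α lam : WithTop ℝ, α ≤ b ∧
    (lam = ⊤ ∨ ∃ r ∈ Λ, lam = (r : WithTop ℝ)) ∧
    U = {γ : {γ : WithTop ℝ // γ ≤ b} | α < (γ : WithTop ℝ) ∧ (γ : WithTop ℝ) ≤ lam}}

/-- The `Λ`-upper limit topology on `(-∞, +∞] = ℝ ∪ {∞}`. -/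
def upperTopAll (Λ : Set ℝ) : TopologicalSpace (WithTop ℝ) :=
  generateFrom {U | ∃ α lam : WithTop ℝ,
    (lam = ⊤ ∨ ∃ r ∈ Λ, lam = (r : WithTop ℝ)) ∧
    U = {γ : WithTop ℝ | α < γ ∧ γ ≤ lam}}

/-- The `Λ`-upper limit topology on an interval `(a, b]` of `ℝ ∪ {±∞}`. -/
def upperTopE (a b : EReal) (Λ : Set ℝ) : TopologicalSpace {x : EReal // a < x ∧ x ≤ b} :=
  generateFrom {U | ∃ α lam : EReal, (a < α ∧ α ≤ b) ∧
    (lam = ⊤ ∨ ∃ r ∈ Λ, lam = (r : EReal)) ∧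
    U = {x : {x : EReal // a < x ∧ x ≤ b} | α < (x : EReal) ∧ (x : EReal) ≤ lam}}


/-- `𝒲`: the valuation domains of the valuations `w_E : φ ↦ lim_n v(φ(s_n))`, as `E`
ranges over the pseudo-convergent sequences for which `w_E` is a valuation. -/
def WW (v : AddValuation K (WithTop ℝ)) : Set (ValuationSubring (RatFunc K)) :=
  {W | ∃ (s : ℕ → K) (w : AddValuation (RatFunc K) (WithTop ℝ)), IsPC v s ∧
    (∀ φ : RatFunc K, OrdLim (fun n => v (RatFunc.eval (RingHom.id K) (s n) φ)) (w φ)) ∧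
    (W : Set (RatFunc K)) = {φ : RatFunc K | 0 ≤ w φ}}

/-! ### Auxiliary lemmas for Statement 0 -/

section Aux0

lemma expNeg_coe (r : ℝ) : expNeg (r : WithTop ℝ) = Real.exp (-r) := rfl

lemma expNeg_top : expNeg (⊤ : WithTop ℝ) = 0 := rfl

lemma expNeg_nonneg (a : WithTop ℝ) : 0 ≤ expNeg a := by
  induction a using WithTop.recTopCoe with
  | top => simp [expNeg]
  | coe r => exact (Real.exp_pos _).le

lemma expNeg_lt_expNeg {a b : WithTop ℝ} (h : a < b) : expNeg b < expNeg a := by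
  induction a using WithTop.recTopCoe with
  | top => exact absurd h (not_top_lt)
  | coe r =>
    induction b using WithTop.recTopCoe with
    | top => simpa [expNeg_top, expNeg_coe] using Real.exp_pos (-r)
    | coe q =>
      rw [expNeg_coe, expNeg_coe]
      exact Real.exp_lt_exp.2 (by have := WithTop.coe_lt_coe.1 h; linarith)

lemma expNeg_le_expNeg {a b : WithTop ℝ} (h : a ≤ b) : expNeg b ≤ expNeg a := by
  rcases h.lt_or_eq with h | h
  · exact (expNeg_lt_expNeg h).le
  · rw [h]

lemma expNeg_min (a b : WithTop ℝ) : expNeg (min a b) = max (expNeg a) (expNeg b) := by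
  rcases le_total a b with h | h
  · rw [min_eq_left h, max_eq_left (expNeg_le_expNeg h)]
  · rw [min_eq_right h, max_eq_right (expNeg_le_expNeg h)]

variable {v : AddValuation K (WithTop ℝ)} {δ : WithTop ℝ} {s t : ℕ → K}

lemma IsPC.gammaMono (hs : IsPC v s) :
    StrictMono (fun n => v (s (n + 1) - s n)) :=
  strictMono_nat_of_lt_succ hs

lemma IsPC.gamma_lt_breadth (hs : IsPC v s) (hsδ : IsBreadth v s δ) (n : ℕ) :
    v (s (n + 1) - s n) < δ := by
  by_contra hc
  push_neg at hc
  have h2 := hsδ.2 (v (s (n + 2) - s (n + 1))) (lt_of_le_of_lt hc (hs n))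
  obtain ⟨m, hm1, hm2⟩ := (h2.and (eventually_ge_atTop (n + 1))).exists
  exact absurd hm1 (not_lt.2 (hs.gammaMono.monotone hm2))

lemma IsPC.gauge (hs : IsPC v s) :
    ∀ {n m : ℕ}, n < m → v (s m - s n) = v (s (n + 1) - s n) := by
  intro n m h
  induction m with
  | zero => omega
  | succ m ih =>
    rcases Nat.lt_succ_iff_lt_or_eq.mp h with h' | h'
    · have hm : v (s m - s n) = v (s (n + 1) - s n) := ih h'
      have h2 : v (s m - s n) < v (s (m + 1) - s m) := by
        rw [hm]; exact hs.gammaMono h'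
      have e : s (m + 1) - s n = (s (m + 1) - s m) + (s m - s n) := by ring
      rw [e, AddValuation.map_add_eq_of_lt_right v h2, hm]
    · subst h'
      rfl

lemma tendsto_expNeg_of_ordLim {f : ℕ → WithTop ℝ}
    (hf : OrdLim f δ) (hlt : ∀ n, f n < δ) :
    Tendsto (fun n => expNeg (f n)) atTop (𝓝 (expNeg δ)) := by
  rw [Metric.tendsto_atTop]
  intro ε hε
  have hpos : (0 : ℝ) < expNeg δ + ε / 2 := by
    have := expNeg_nonneg δ; linarith
  set a : ℝ := -Real.log (expNeg δ + ε / 2) with ha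
  have hexp : Real.exp (-a) = expNeg δ + ε / 2 := by
    rw [ha, neg_neg, Real.exp_log hpos]
  have haδ : (a : WithTop ℝ) < δ := by
    rcases lt_or_ge (a : WithTop ℝ) δ with h | h
    · exact h
    · have h2 := expNeg_le_expNeg h
      rw [expNeg_coe, hexp] at h2
      linarith
  obtain ⟨N, hN⟩ := eventually_atTop.mp (hf.1 a haδ)
  refine ⟨N, fun n hn => ?_⟩
  have h1 : expNeg (f n) ≤ expNeg δ + ε / 2 := by
    rw [← hexp, ← expNeg_coe]; exact expNeg_le_expNeg (hN n hn).le
  have h2 : expNeg δ < expNeg (f n) := expNeg_lt_expNeg (hlt n)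
  rw [Real.dist_eq, abs_of_nonneg (by linarith)]
  linarith

/-- Tendency of the gauge values to `e^{-δ}`. -/
lemma tendsto_expNeg_gauge (hs : IsPC v s) (hsδ : IsBreadth v s δ) :
    Tendsto (fun n => expNeg (v (s (n + 1) - s n))) atTop (𝓝 (expNeg δ)) :=
  tendsto_expNeg_of_ordLim hsδ (hs.gamma_lt_breadth hsδ)

/-- The fundamental dichotomy: either the distances `v(s_n - t_n)` are eventually
constant (below the gauges), or they are always at least the gauges. -/
lemma main_limit (v : AddValuation K (WithTop ℝ)) {δ : WithTop ℝ} {s t : ℕ → K}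
    (hs : IsPC v s) (hsδ : IsBreadth v s δ)
    (ht : IsPC v t) (htδ : IsBreadth v t δ) :
    (∃ N, v (s N - t N) < min (v (s (N + 1) - s N)) (v (t (N + 1) - t N)) ∧
      (∀ n, N ≤ n → v (s n - t n) = v (s N - t N)) ∧
      Tendsto (fun n => max (dK v (s n) (t n) - expNeg δ) 0) atTop
        (𝓝 (expNeg (v (s N - t N)) - expNeg δ))) ∨
    ((∀ n, min (v (s (n + 1) - s n)) (v (t (n + 1) - t n)) ≤ v (s n - t n)) ∧
      Tendsto (fun n => max (dK v (s n) (t n) - expNeg δ) 0) atTop (𝓝 0)) := by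
  by_cases hA : ∃ N, v (s N - t N) < min (v (s (N + 1) - s N)) (v (t (N + 1) - t N))
  · obtain ⟨N, hN⟩ := hA
    left
    have hconst : ∀ n, N ≤ n → v (s n - t n) = v (s N - t N) := by
      intro n hn
      induction n, hn using Nat.le_induction with
      | base => rfl
      | succ n hn ih =>
        have hmin : min (v (s (N + 1) - s N)) (v (t (N + 1) - t N)) ≤
            min (v (s (n + 1) - s n)) (v (t (n + 1) - t n)) :=
          min_le_min (hs.gammaMono.monotone hn) (ht.gammaMono.monotone hn)
        have h2 : v (s n - t n) < v ((s (n + 1) - s n) - (t (n + 1) - t n)) := by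
          rw [ih]
          exact lt_of_lt_of_le (lt_of_lt_of_le hN hmin) (AddValuation.map_sub v _ _)
        have e : s (n + 1) - t (n + 1) =
            ((s (n + 1) - s n) - (t (n + 1) - t n)) + (s n - t n) := by ring
        rw [e, AddValuation.map_add_eq_of_lt_right v h2, ih]
    have huδ : v (s N - t N) < δ :=
      lt_of_lt_of_le hN (le_trans (min_le_left _ _) (hs.gamma_lt_breadth hsδ N).le)
    have hur : expNeg δ < expNeg (v (s N - t N)) := expNeg_lt_expNeg huδ
    refine ⟨N, hN, hconst, ?_⟩
    refine tendsto_const_nhds.congr' ?_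
    filter_upwards [eventually_ge_atTop N] with n hn
    have : dK v (s n) (t n) = expNeg (v (s N - t N)) := by
      unfold dK; rw [hconst n hn]
    rw [this, max_eq_left (by linarith)]
  · push_neg at hA
    right
    refine ⟨hA, ?_⟩
    have hupper : Tendsto
        (fun n => max (expNeg (v (s (n + 1) - s n))) (expNeg (v (t (n + 1) - t n)))
          - expNeg δ) atTop (𝓝 0) := by
      have := ((tendsto_expNeg_gauge hs hsδ).max (tendsto_expNeg_gauge ht htδ)).sub
        (tendsto_const_nhds : Tendsto (fun _ : ℕ => expNeg δ) atTop (𝓝 (expNeg δ)))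
      simpa using this
    refine tendsto_of_tendsto_of_tendsto_of_le_of_le tendsto_const_nhds hupper
      (fun n => le_max_right _ _) (fun n => ?_)
    have hb : dK v (s n) (t n) ≤
        max (expNeg (v (s (n + 1) - s n))) (expNeg (v (t (n + 1) - t n))) := by
      rw [← expNeg_min]
      exact expNeg_le_expNeg (hA n)
    have hr : expNeg δ ≤ expNeg (v (s (n + 1) - s n)) :=
      (expNeg_lt_expNeg (hs.gamma_lt_breadth hsδ n)).le
    have hr2 : expNeg δ ≤
        max (expNeg (v (s (n + 1) - s n))) (expNeg (v (t (n + 1) - t n))) :=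
      le_trans hr (le_max_left _ _)
    exact max_le (by linarith) (by linarith)

/-- If `V_{E'} = V_E` for pseudo-convergent sequences, then `s'_n` is eventually within
each gauge of `s_n`. -/
lemma close_of_VESet_eq (hs : IsPC v s) {s' : ℕ → K}
    (hVE : VESet v s' = VESet v s) (N : ℕ) :
    ∀ᶠ n in atTop, v (s (N + 1) - s N) ≤ v (s n - s' n) := by
  set c : K := s (N + 1) - s N with hc
  have hne : v c ≠ ⊤ := (hs N).ne_top
  obtain ⟨g, hg⟩ := WithTop.ne_top_iff_exists.mp hne
  have hc0 : c ≠ 0 := by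
    intro h
    rw [h, AddValuation.map_zero] at hg
    exact (WithTop.coe_ne_top hg).elim
  set φ : RatFunc K := algebraMap (Polynomial K) (RatFunc K)
    (Polynomial.C c⁻¹ * (Polynomial.X - Polynomial.C (s N))) with hφ
  have heval : ∀ a : K, RatFunc.eval (RingHom.id K) a φ = c⁻¹ * (a - s N) := by
    intro a
    rw [hφ, RatFunc.eval_algebraMap]
    simp
  have hvinv : v c⁻¹ = ((-g : ℝ) : WithTop ℝ) := by
    rw [AddValuation.map_inv, ← hg, ← WithTop.LinearOrderedAddCommGroup.coe_neg]
  have hφs : φ ∈ VESet v s := by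
    have : ∀ᶠ n in atTop, 0 ≤ v (RatFunc.eval (RingHom.id K) (s n) φ) := by
      filter_upwards [eventually_ge_atTop (N + 1)] with n hn
      rw [heval, AddValuation.map_mul, hvinv, hs.gauge (by omega : N < n), ← hc, ← hg,
        ← WithTop.coe_add]
      simp
    exact this
  have hφs' : φ ∈ VESet v s' := hVE ▸ hφs
  filter_upwards [hφs', eventually_ge_atTop (N + 1)] with n hn1 hn2
  have hvs' : v c ≤ v (s' n - s N) := by
    have h0 : (0 : WithTop ℝ) ≤ v (c⁻¹ * (s' n - s N)) := by
      rw [← heval (s' n)]; exact hn1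
    have e : s' n - s N = c * (c⁻¹ * (s' n - s N)) := by
      field_simp
    calc v c = v c + 0 := by rw [add_zero]
      _ ≤ v c + v (c⁻¹ * (s' n - s N)) := add_le_add le_rfl h0
      _ = v (s' n - s N) := by rw [← AddValuation.map_mul, ← e]
  have hvs : v (s n - s N) = v c := hs.gauge (by omega : N < n)
  have e2 : s n - s' n = (s n - s N) - (s' n - s N) := by ring
  rw [e2]
  exact AddValuation.map_le_sub v hvs.ge hvs'

end Aux0

/-- For pseudo-convergent sequences `E = {s_n}`, `F = {t_n}` of breadth
`δ`, the limit `lim_n max (d(s_n,t_n) - e^{-δ}) 0` exists in `[0,∞)`, and it only depends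
on the ring `V_E` (not on the representing sequence); hence `d_δ` is well defined. -/
theorem statement0 (v : AddValuation K (WithTop ℝ)) (hv : IsRankOne v)
    (δ : WithTop ℝ) (s t : ℕ → K)
    (hs : IsPC v s) (hsδ : IsBreadth v s δ) (ht : IsPC v t) (htδ : IsBreadth v t δ) :
    (∃ l : ℝ, 0 ≤ l ∧
      Tendsto (fun n => max (dK v (s n) (t n) - expNeg δ) 0) atTop (𝓝 l)) ∧
    (∀ s' : ℕ → K, IsPC v s' → IsBreadth v s' δ → VESet v s' = VESet v s →
      ∀ l l' : ℝ,
        Tendsto (fun n => max (dK v (s n) (t n) - expNeg δ) 0) atTop (𝓝 l) →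
        Tendsto (fun n => max (dK v (s' n) (t n) - expNeg δ) 0) atTop (𝓝 l') →
        l' = l) := by
  constructor
  · rcases main_limit v hs hsδ ht htδ with ⟨N, hN, hconst, htend⟩ | ⟨_, htend⟩
    · refine ⟨_, ?_, htend⟩
      have huδ : v (s N - t N) < δ :=
        lt_of_lt_of_le hN (le_trans (min_le_left _ _) (hs.gamma_lt_breadth hsδ N).le)
      have := expNeg_lt_expNeg huδ
      linarith
    · exact ⟨0, le_refl 0, htend⟩
  · intro s' hs' hs'δ hVE l l' hl hl'
    rcases main_limit v hs hsδ ht htδ with ⟨N, hN, hconst, htend⟩ | ⟨hB, htend⟩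
    · -- Case A: the distances `v(s_n - t_n)` are eventually constant, equal to `u < δ`.
      set u := v (s N - t N) with hu
      have huδ : u < δ :=
        lt_of_lt_of_le hN (le_trans (min_le_left _ _) (hs.gamma_lt_breadth hsδ N).le)
      obtain ⟨M, hM⟩ := (hsδ.1 u huδ).exists
      have hclose := close_of_VESet_eq hs hVE M
      have heq : ∀ᶠ n in atTop, max (dK v (s' n) (t n) - expNeg δ) 0
          = max (dK v (s n) (t n) - expNeg δ) 0 := by
        filter_upwards [hclose, eventually_ge_atTop N] with n h1 h2
        have hst : v (s n - t n) = u := hconst n h2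
        have h3 : v (s n - t n) < v (s' n - s n) := by
          rw [hst, AddValuation.map_sub_swap]
          exact lt_of_lt_of_le hM h1
        have e : s' n - t n = (s' n - s n) + (s n - t n) := by ring
        have hv' : v (s' n - t n) = v (s n - t n) := by
          rw [e, AddValuation.map_add_eq_of_lt_right v h3]
        unfold dK
        rw [hv']
      exact tendsto_nhds_unique (Filter.Tendsto.congr' heq hl') hl
    · -- Case B: both limits are `0`.
      have hl0 : l = 0 := tendsto_nhds_unique hl htend
      have hnn : 0 ≤ l' :=
        ge_of_tendsto hl' (Eventually.of_forall fun n => le_max_right _ _)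
      have hub : ∀ N : ℕ, l' ≤ expNeg (v (s (N + 1) - s N)) - expNeg δ := by
        intro N
        have hclose := close_of_VESet_eq hs hVE N
        have hMten : Tendsto (fun n => max (expNeg (v (s (n + 1) - s n)))
            (expNeg (v (t (n + 1) - t n)))) atTop (𝓝 (expNeg δ)) := by
          have := (tendsto_expNeg_gauge hs hsδ).max (tendsto_expNeg_gauge ht htδ)
          simpa using this
        have hup : Tendsto (fun n => max (expNeg (v (s (N + 1) - s N)))
            (max (expNeg (v (s (n + 1) - s n))) (expNeg (v (t (n + 1) - t n))))
            - expNeg δ) atTop (𝓝 (expNeg (v (s (N + 1) - s N)) - expNeg δ)) := by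
          have h := ((tendsto_const_nhds : Tendsto (fun _ : ℕ =>
              expNeg (v (s (N + 1) - s N))) atTop
              (𝓝 (expNeg (v (s (N + 1) - s N))))).max hMten).sub
            (tendsto_const_nhds : Tendsto (fun _ : ℕ => expNeg δ) atTop (𝓝 (expNeg δ)))
          rwa [max_eq_left (expNeg_lt_expNeg (hs.gamma_lt_breadth hsδ N)).le] at h
        refine le_of_tendsto_of_tendsto hl' hup ?_
        filter_upwards [hclose] with n h1
        have hv1 : min (v (s (N + 1) - s N))
            (min (v (s (n + 1) - s n)) (v (t (n + 1) - t n))) ≤ v (s' n - t n) := by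
          have e : s' n - t n = (s' n - s n) + (s n - t n) := by ring
          rw [e]
          refine le_trans ?_ (AddValuation.map_add v _ _)
          refine le_min (le_trans (min_le_left _ _) ?_) (le_trans (min_le_right _ _) (hB n))
          rw [AddValuation.map_sub_swap v (s' n) (s n)]
          exact h1
        have hb : dK v (s' n) (t n) ≤ max (expNeg (v (s (N + 1) - s N)))
            (max (expNeg (v (s (n + 1) - s n))) (expNeg (v (t (n + 1) - t n)))) := by
          rw [← expNeg_min, ← expNeg_min]
          exact expNeg_le_expNeg hv1
        have hr : expNeg δ ≤ expNeg (v (s (N + 1) - s N)) :=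
          (expNeg_lt_expNeg (hs.gamma_lt_breadth hsδ N)).le
        have hr2 : expNeg δ ≤ max (expNeg (v (s (N + 1) - s N)))
            (max (expNeg (v (s (n + 1) - s n))) (expNeg (v (t (n + 1) - t n)))) :=
          le_trans hr (le_max_left _ _)
        exact max_le (by linarith) (by linarith)
      have hzero : Tendsto (fun N => expNeg (v (s (N + 1) - s N)) - expNeg δ)
          atTop (𝓝 0) := by
        have := (tendsto_expNeg_gauge hs hsδ).sub
          (tendsto_const_nhds : Tendsto (fun _ : ℕ => expNeg δ) atTop (𝓝 (expNeg δ)))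
        simpa using this
      have hle : l' ≤ 0 := ge_of_tendsto hzero (Eventually.of_forall hub)
      rw [hl0]
      linarith

end PaperPCZar
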